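/- Uniform existence of the pressure for continuous potentials (absence of metastable states on the lattice ℕ): For every continuous potential f:Ω→ℝ there exists a real number P(f) such that ‖(1/n) log(L_f^n 𝟙) − P(f)‖₀ → 0 as n→∞; that is, the functions x ↦ (1/n) log[(L_f^n 𝟙)(x)] converge uniformly on Ω to the constant P(f). -/

import Mathlib

open MeasureTheory Filter Topology

noncomputable def dOmega {M : Type*} [MetricSpace M] (x y : ℕ → M) : ℝ :=
  ∑' n : ℕ, (1 / 2 : ℝ) ^ (n + 1) * dist (x n) (y n)

/-- The sequence `(a, x₁, x₂, …)` obtained by prepending `a` to `x`. -/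
def consSeq {M : Type*} (a : M) (x : ℕ → M) : ℕ → M := fun n => Nat.casesOn n a x

/-- The left shift `σ(x₁,x₂,…) = (x₂,x₃,…)`. -/
def shift {M : Type*} (x : ℕ → M) : ℕ → M := fun n => x (n + 1)

/-- The Ruelle transfer operator with a priori measure `μ` and potential `f`. -/
noncomputable def Ruelle {M : Type*} [MeasurableSpace M] (μ : Measure M)
    (f φ : (ℕ → M) → ℝ) : (ℕ → M) → ℝ :=
  fun x => ∫ a, Real.exp (f (consSeq a x)) * φ (consSeq a x) ∂μ

/-- The `n`-th Birkhoff sum `S_n φ = Σ_{j=0}^{n-1} φ ∘ σ^j`. -/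
noncomputable def birkhoff {M : Type*} (φ : (ℕ → M) → ℝ) (n : ℕ) : (ℕ → M) → ℝ :=
  fun x => ∑ j ∈ Finset.range n, φ (shift^[j] x)

/-- `f` is `α`-Hölder with respect to the metric `dOmega`. -/
def IsHolder {M : Type*} [MetricSpace M] (α : ℝ) (f : (ℕ → M) → ℝ) : Prop :=
  ∃ C : ℝ, 0 ≤ C ∧ ∀ x y, |f x - f y| ≤ C * dOmega x y ^ α

section aux

variable {M : Type*} [MetricSpace M] [CompactSpace M] [MeasurableSpace M] [BorelSpace M]

lemma continuous_consSeq : Continuous fun p : M × (ℕ → M) => consSeq p.1 p.2 := by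
  refine continuous_pi fun n => ?_
  cases n with
  | zero => exact continuous_fst
  | succ k => exact (continuous_apply k).comp continuous_snd

variable (μ : Measure M) [IsProbabilityMeasure μ] {f : (ℕ → M) → ℝ}

lemma integrable_ruelle (hf : Continuous f) {φ : (ℕ → M) → ℝ} (hφ : Continuous φ)
    (x : ℕ → M) :
    Integrable (fun a => Real.exp (f (consSeq a x)) * φ (consSeq a x)) μ := by
  rw [← integrableOn_univ]
  have h1 : Continuous fun a : M => consSeq a x :=
    continuous_consSeq.comp (continuous_id.prodMk continuous_const)
  exact ((Real.continuous_exp.comp (hf.comp h1)).mul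
    (hφ.comp h1)).continuousOn.integrableOn_compact isCompact_univ

lemma ruelle_continuous (hf : Continuous f) {φ : (ℕ → M) → ℝ} (hφ : Continuous φ) :
    Continuous (Ruelle μ f φ) := by
  have h1 : Continuous fun p : M × (ℕ → M) =>
      Real.exp (f (consSeq p.1 p.2)) * φ (consSeq p.1 p.2) :=
    (Real.continuous_exp.comp (hf.comp continuous_consSeq)).mul (hφ.comp continuous_consSeq)
  obtain ⟨C, hC⟩ := isBounded_iff_forall_norm_le.1 (isCompact_range h1).isBounded
  have : Continuous fun x : ℕ → M =>
      ∫ a, (fun p : M × (ℕ → M) => Real.exp (f (consSeq p.1 p.2)) * φ (consSeq p.1 p.2)) (a, x) ∂μ := by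
    refine continuous_of_dominated
      (F := fun (x : ℕ → M) (a : M) =>
        (fun p : M × (ℕ → M) => Real.exp (f (consSeq p.1 p.2)) * φ (consSeq p.1 p.2)) (a, x))
      (bound := fun _ => C) ?_ ?_ (integrable_const C) ?_
    · intro x
      exact ((h1.comp (continuous_id.prodMk continuous_const))).aestronglyMeasurable
    · intro x
      exact Eventually.of_forall fun a => hC _ ⟨(a, x), rfl⟩
    · exact Eventually.of_forall fun a => h1.comp (continuous_const.prodMk continuous_id)
  exact this

lemma iter_cont_bound (hf : Continuous f) (B : ℝ) (hB : ∀ x, |f x| ≤ B) (n : ℕ) :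
    Continuous ((Ruelle μ f)^[n] 1) ∧
      ∀ x, Real.exp (-(n * B)) ≤ (Ruelle μ f)^[n] 1 x ∧
        (Ruelle μ f)^[n] 1 x ≤ Real.exp (n * B) := by
  induction n with
  | zero => exact ⟨continuous_one, fun x => by simp⟩
  | succ n ih =>
    refine ⟨?_, fun x => ?_⟩
    · rw [Function.iterate_succ_apply']
      exact ruelle_continuous μ hf ih.1
    rw [Function.iterate_succ_apply']
    have hint := integrable_ruelle μ hf ih.1 x
    constructor
    · have hpt : ∀ a, Real.exp (-((n + 1 : ℕ) * B)) ≤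
          Real.exp (f (consSeq a x)) * (Ruelle μ f)^[n] 1 (consSeq a x) := by
        intro a
        have h1 : Real.exp (-B) ≤ Real.exp (f (consSeq a x)) :=
          Real.exp_le_exp.2 (neg_le_of_abs_le (hB _))
        have h2 := (ih.2 (consSeq a x)).1
        have heq : Real.exp (-((n + 1 : ℕ) * B)) = Real.exp (-B) * Real.exp (-(n * B)) := by
          rw [← Real.exp_add]; congr 1; push_cast; ring
        rw [heq]
        exact mul_le_mul h1 h2 (Real.exp_nonneg _) (Real.exp_nonneg _)
      calc Real.exp (-((n + 1 : ℕ) * B))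
          = ∫ _ : M, Real.exp (-((n + 1 : ℕ) * B)) ∂μ := by simp
        _ ≤ _ := integral_mono (integrable_const _) hint hpt
    · have hpt : ∀ a, Real.exp (f (consSeq a x)) * (Ruelle μ f)^[n] 1 (consSeq a x) ≤
          Real.exp ((n + 1 : ℕ) * B) := by
        intro a
        have h1 : Real.exp (f (consSeq a x)) ≤ Real.exp B :=
          Real.exp_le_exp.2 (le_of_abs_le (hB _))
        have h2 := (ih.2 (consSeq a x)).2
        have heq : Real.exp ((n + 1 : ℕ) * B) = Real.exp B * Real.exp (n * B) := by
          rw [← Real.exp_add]; congr 1; push_cast; ring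
        rw [heq]
        exact mul_le_mul h1 h2 ((Real.exp_pos _).le.trans (ih.2 _).1) (Real.exp_nonneg _)
      calc (Ruelle μ f ((Ruelle μ f)^[n] 1)) x
          ≤ ∫ _ : M, Real.exp ((n + 1 : ℕ) * B) ∂μ := integral_mono hint (integrable_const _) hpt
        _ = Real.exp ((n + 1 : ℕ) * B) := by simp

lemma ruelle_mono (hf : Continuous f) {φ ψ : (ℕ → M) → ℝ} (hφ : Continuous φ)
    (hψ : Continuous ψ) (h : ∀ y, φ y ≤ ψ y) (x : ℕ → M) :
    Ruelle μ f φ x ≤ Ruelle μ f ψ x :=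
  integral_mono (integrable_ruelle μ hf hφ x) (integrable_ruelle μ hf hψ x) fun a =>
    mul_le_mul_of_nonneg_left (h _) (Real.exp_nonneg _)

lemma iter_mono (hf : Continuous f) (n : ℕ) :
    ∀ {φ ψ : (ℕ → M) → ℝ}, Continuous φ → Continuous ψ → (∀ y, φ y ≤ ψ y) →
      ∀ x, (Ruelle μ f)^[n] φ x ≤ (Ruelle μ f)^[n] ψ x := by
  induction n with
  | zero => intro φ ψ _ _ h x; exact h x
  | succ n ih =>
    intro φ ψ hφ hψ h x
    rw [Function.iterate_succ_apply, Function.iterate_succ_apply]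
    exact ih (ruelle_continuous μ hf hφ) (ruelle_continuous μ hf hψ)
      (fun y => ruelle_mono μ hf hφ hψ h y) x

lemma iter_const_mul (n : ℕ) :
    ∀ (c : ℝ) (φ : (ℕ → M) → ℝ) (x : ℕ → M),
      (Ruelle μ f)^[n] (fun y => c * φ y) x = c * (Ruelle μ f)^[n] φ x := by
  induction n with
  | zero => intro c φ x; rfl
  | succ n ih =>
    intro c φ x
    rw [Function.iterate_succ_apply, Function.iterate_succ_apply]
    have hT : Ruelle μ f (fun y => c * φ y) = fun y => c * Ruelle μ f φ y := by
      funext y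
      unfold Ruelle
      rw [← integral_const_mul]
      congr 1
      funext a
      ring
    rw [hT]
    exact ih c (Ruelle μ f φ) x

lemma iter_ratio (hf : Continuous f) (B : ℝ) (hB : ∀ x, |f x| ≤ B)
    (c : ℕ → ℝ) (hc : ∀ k (u v : ℕ → M), (∀ i < k, u i = v i) → f u - f v ≤ c k) (n : ℕ) :
    ∀ k (x y : ℕ → M), (∀ i < k, x i = y i) →
      (Ruelle μ f)^[n] 1 x ≤
        Real.exp (∑ j ∈ Finset.range n, c (k + 1 + j)) * (Ruelle μ f)^[n] 1 y := by
  induction n with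
  | zero => intro k x y _; simp
  | succ n ih =>
    intro k x y hxy
    have hApos : ∀ m (z : ℕ → M), 0 < (Ruelle μ f)^[m] 1 z := fun m z =>
      (Real.exp_pos _).trans_le ((iter_cont_bound μ hf B hB m).2 z).1
    have key : ∀ a : M, Real.exp (f (consSeq a x)) * (Ruelle μ f)^[n] 1 (consSeq a x) ≤
        (Real.exp (c (k + 1)) * Real.exp (∑ j ∈ Finset.range n, c (k + 1 + 1 + j))) *
          (Real.exp (f (consSeq a y)) * (Ruelle μ f)^[n] 1 (consSeq a y)) := by
      intro a
      have hagree : ∀ i < k + 1, consSeq a x i = consSeq a y i := by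
        intro i hi
        cases i with
        | zero => rfl
        | succ j => exact hxy j (Nat.lt_of_succ_lt_succ hi)
      have h1 : Real.exp (f (consSeq a x)) ≤
          Real.exp (c (k + 1)) * Real.exp (f (consSeq a y)) := by
        rw [← Real.exp_add]
        exact Real.exp_le_exp.2 (by linarith [hc (k + 1) _ _ hagree])
      have h2 := ih (k + 1) _ _ hagree
      calc Real.exp (f (consSeq a x)) * (Ruelle μ f)^[n] 1 (consSeq a x)
          ≤ (Real.exp (c (k + 1)) * Real.exp (f (consSeq a y))) *
            (Real.exp (∑ j ∈ Finset.range n, c (k + 1 + 1 + j)) *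
              (Ruelle μ f)^[n] 1 (consSeq a y)) :=
            mul_le_mul h1 h2 (hApos n _).le (by positivity)
        _ = _ := by ring
    have hsum : ∑ j ∈ Finset.range (n + 1), c (k + 1 + j) =
        c (k + 1) + ∑ j ∈ Finset.range n, c (k + 1 + 1 + j) := by
      rw [Finset.sum_range_succ']
      simp only [Nat.add_zero]
      rw [add_comm]
      congr 1
      exact Finset.sum_congr rfl fun i _ => congrArg c (by omega)
    rw [Function.iterate_succ_apply', hsum, Real.exp_add]
    have hi1 := integrable_ruelle μ hf (iter_cont_bound μ hf B hB n).1 x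
    have hi2 := integrable_ruelle μ hf (iter_cont_bound μ hf B hB n).1 y
    calc (Ruelle μ f ((Ruelle μ f)^[n] 1)) x
        ≤ ∫ a, (Real.exp (c (k + 1)) * Real.exp (∑ j ∈ Finset.range n, c (k + 1 + 1 + j))) *
            (Real.exp (f (consSeq a y)) * (Ruelle μ f)^[n] 1 (consSeq a y)) ∂μ :=
          integral_mono hi1 (hi2.const_mul _) key
      _ = _ := by rw [integral_const_mul]; rfl

end aux

set_option linter.unusedSectionVars false

/-- Uniform existence of the pressure for continuous potentials (absence of
metastable states on the lattice ℕ). -/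
theorem pressure_exists_uniformly
    {M : Type*} [MetricSpace M] [CompactSpace M] [MeasurableSpace M] [BorelSpace M]
    (μ : Measure M) [IsProbabilityMeasure μ]
    (hfull : ∀ U : Set M, IsOpen U → U.Nonempty → 0 < μ U)
    (f : (ℕ → M) → ℝ) (hf : Continuous f) :
    ∃ p : ℝ, TendstoUniformly
      (fun (n : ℕ) (x : ℕ → M) => (n : ℝ)⁻¹ * Real.log ((Ruelle μ f)^[n] 1 x))
      (fun _ => p) atTop := by
  classical
  -- M is nonempty since it carries a probability measure
  have hM : Nonempty M := by
    by_contra h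
    rw [not_nonempty_iff] at h
    have h1 : μ Set.univ = 1 := measure_univ
    rw [Set.univ_eq_empty_iff.2 h, measure_empty] at h1
    exact zero_ne_one h1
  have hΩ : Nonempty (ℕ → M) := ⟨fun _ => Classical.choice hM⟩
  obtain ⟨x₀⟩ := hΩ
  have hΩ' : Nonempty (ℕ → M) := ⟨x₀⟩
  -- bound on f
  obtain ⟨B, hBr⟩ := isBounded_iff_forall_norm_le.1 (isCompact_range hf).isBounded
  have hB : ∀ x, |f x| ≤ B := fun x => hBr (f x) ⟨x, rfl⟩
  have hB0 : (0 : ℝ) ≤ B := (abs_nonneg _).trans (hB x₀)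
  have hA := iter_cont_bound μ hf B hB
  have hApos : ∀ n x, 0 < (Ruelle μ f)^[n] 1 x := fun n x =>
    (Real.exp_pos _).trans_le ((hA n).2 x).1
  have hlog_le : ∀ n (x : ℕ → M), Real.log ((Ruelle μ f)^[n] 1 x) ≤ n * B := fun n x =>
    (Real.log_le_iff_le_exp (hApos n x)).2 ((hA n).2 x).2
  have hlog_ge : ∀ n (x : ℕ → M), -(n * B) ≤ Real.log ((Ruelle μ f)^[n] 1 x) := fun n x =>
    (Real.le_log_iff_exp_le (hApos n x)).2 ((hA n).2 x).1
  set s : ℕ → ℝ := fun n => ⨆ x : ℕ → M, Real.log ((Ruelle μ f)^[n] 1 x) with hs_def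
  set I : ℕ → ℝ := fun n => ⨅ x : ℕ → M, Real.log ((Ruelle μ f)^[n] 1 x) with hI_def
  have hbddA : ∀ n, BddAbove (Set.range fun x : ℕ → M => Real.log ((Ruelle μ f)^[n] 1 x)) :=
    fun n => ⟨n * B, fun r ⟨x, hx⟩ => hx ▸ hlog_le n x⟩
  have hbddB : ∀ n, BddBelow (Set.range fun x : ℕ → M => Real.log ((Ruelle μ f)^[n] 1 x)) :=
    fun n => ⟨-(n * B), fun r ⟨x, hx⟩ => hx ▸ hlog_ge n x⟩
  have hs_le : ∀ n (x : ℕ → M), Real.log ((Ruelle μ f)^[n] 1 x) ≤ s n :=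
    fun n x => le_ciSup (hbddA n) x
  have hI_le : ∀ n (x : ℕ → M), I n ≤ Real.log ((Ruelle μ f)^[n] 1 x) :=
    fun n x => ciInf_le (hbddB n) x
  have hsI : ∀ n, I n ≤ s n := fun n => (hI_le n x₀).trans (hs_le n x₀)
  have hs_ub : ∀ n, s n ≤ n * B := fun n => ciSup_le fun x => hlog_le n x
  have hI_lb : ∀ n, -(n * B) ≤ I n := fun n => le_ciInf fun x => hlog_ge n x
  -- subadditivity of s
  have hsub : Subadditive s := by
    intro m n
    refine ciSup_le fun x => ?_
    have hub : ∀ y, (Ruelle μ f)^[n] 1 y ≤ Real.exp (s n) * (1 : (ℕ → M) → ℝ) y := by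
      intro y
      rw [Pi.one_apply, mul_one, ← Real.exp_log (hApos n y)]
      exact Real.exp_le_exp.2 (hs_le n y)
    have h1 : (Ruelle μ f)^[m] ((Ruelle μ f)^[n] 1) x ≤ Real.exp (s n) * (Ruelle μ f)^[m] 1 x := by
      have := iter_mono μ hf m (hA n).1 (continuous_const.mul continuous_one :
          Continuous fun y => Real.exp (s n) * (1 : (ℕ → M) → ℝ) y) hub x
      rw [← iter_const_mul μ m (Real.exp (s n)) 1 x]; exact this
    have h2 : Real.log ((Ruelle μ f)^[m + n] 1 x) ≤ s n + Real.log ((Ruelle μ f)^[m] 1 x) := by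
      rw [Function.iterate_add_apply]
      calc Real.log ((Ruelle μ f)^[m] ((Ruelle μ f)^[n] 1) x)
          ≤ Real.log (Real.exp (s n) * (Ruelle μ f)^[m] 1 x) := by
            refine Real.log_le_log ?_ h1
            have := Function.iterate_add_apply (Ruelle μ f) m n 1
            exact this ▸ hApos (m + n) x
        _ = s n + Real.log ((Ruelle μ f)^[m] 1 x) := by
            rw [Real.log_mul (Real.exp_ne_zero _) (hApos m x).ne', Real.log_exp]
    linarith [hs_le m x]
  -- superadditivity of I
  have hsuper : Subadditive fun n => -(I n) := by
    intro m n
    have key : I m + I n ≤ I (m + n) := by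
      refine le_ciInf fun x => ?_
      have hlb : ∀ y, Real.exp (I n) * (1 : (ℕ → M) → ℝ) y ≤ (Ruelle μ f)^[n] 1 y := by
        intro y
        rw [Pi.one_apply, mul_one, ← Real.exp_log (hApos n y)]
        exact Real.exp_le_exp.2 (hI_le n y)
      have h1 : Real.exp (I n) * (Ruelle μ f)^[m] 1 x ≤
          (Ruelle μ f)^[m] ((Ruelle μ f)^[n] 1) x := by
        have := iter_mono μ hf m (continuous_const.mul continuous_one :
            Continuous fun y => Real.exp (I n) * (1 : (ℕ → M) → ℝ) y) (hA n).1 hlb x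
        rw [← iter_const_mul μ m (Real.exp (I n)) 1 x]; exact this
      have h2 : I n + Real.log ((Ruelle μ f)^[m] 1 x) ≤ Real.log ((Ruelle μ f)^[m + n] 1 x) := by
        rw [Function.iterate_add_apply]
        calc I n + Real.log ((Ruelle μ f)^[m] 1 x)
            = Real.log (Real.exp (I n) * (Ruelle μ f)^[m] 1 x) := by
              rw [Real.log_mul (Real.exp_ne_zero _) (hApos m x).ne', Real.log_exp]
          _ ≤ Real.log ((Ruelle μ f)^[m] ((Ruelle μ f)^[n] 1) x) :=
              Real.log_le_log (mul_pos (Real.exp_pos _) (hApos m x)) h1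
      linarith [hI_le m x]
    show -I (m + n) ≤ -I m + -I n
    linarith
  -- the modulus-of-continuity sequence c
  set Agr : ℕ → Set ((ℕ → M) × (ℕ → M)) := fun k => {p | ∀ i < k, p.1 i = p.2 i} with hAgr_def
  set G : ℕ → Set ℝ := fun k => (fun p : (ℕ → M) × (ℕ → M) => f p.1 - f p.2) '' Agr k with hG_def
  set c : ℕ → ℝ := fun k => sSup (G k) with hc_def
  have hGne : ∀ k, (G k).Nonempty := fun k => ⟨0, ⟨(x₀, x₀), fun i _ => rfl, sub_self _⟩⟩
  have hGbdd : ∀ k, BddAbove (G k) := by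
    intro k
    refine ⟨2 * B, fun r hr => ?_⟩
    obtain ⟨p, _, rfl⟩ := hr
    have h1 := abs_le.1 (hB p.1)
    have h2 := abs_le.1 (hB p.2)
    show f p.1 - f p.2 ≤ 2 * B
    linarith
  have hc_le : ∀ k (u v : ℕ → M), (∀ i < k, u i = v i) → f u - f v ≤ c k :=
    fun k u v h => le_csSup (hGbdd k) ⟨(u, v), h, rfl⟩
  have hc0 : ∀ k, 0 ≤ c k := fun k => by
    simpa using hc_le k x₀ x₀ fun i _ => rfl
  -- agreement on many coordinates forces f-values close
  have hunif : ∀ ε > (0 : ℝ), ∃ N, ∀ u v : ℕ → M, (∀ i < N, u i = v i) → |f u - f v| < ε := by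
    intro ε hε
    have hUC : UniformContinuous f := CompactSpace.uniformContinuous_of_continuous hf
    have hS : ((fun p : (ℕ → M) × (ℕ → M) => (f p.1, f p.2)) ⁻¹'
        {q : ℝ × ℝ | dist q.1 q.2 < ε}) ∈ uniformity (ℕ → M) := hUC (Metric.dist_mem_uniformity hε)
    have hdir : Directed (· ≥ ·) fun k : ℕ => Filter.principal (Agr k) := by
      intro j k
      refine ⟨max j k, ?_, ?_⟩
      · exact Filter.principal_mono.2 fun p hp i hi => hp i (lt_of_lt_of_le hi (le_max_left _ _))
      · exact Filter.principal_mono.2 fun p hp i hi => hp i (lt_of_lt_of_le hi (le_max_right _ _))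
    have hle : (⨅ k : ℕ, Filter.principal (Agr k)) ≤ uniformity (ℕ → M) := by
      rw [Pi.uniformity]
      refine le_iInf fun i => ?_
      rw [← Filter.map_le_iff_le_comap]
      intro V hV
      rw [Filter.mem_map]
      refine Filter.mem_of_superset (Filter.mem_iInf_of_mem (i + 1)
        (Filter.mem_principal_self _)) ?_
      intro p hp
      have hpi : p.1 i = p.2 i := hp i (Nat.lt_succ_self i)
      simp only [Set.mem_preimage]
      rw [hpi]
      exact refl_mem_uniformity hV
    obtain ⟨N, hN⟩ := (Filter.mem_iInf_of_directed hdir _).1 (hle hS)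
    rw [Filter.mem_principal] at hN
    refine ⟨N, fun u v h => ?_⟩
    have := hN (show (u, v) ∈ Agr N from h)
    simpa [Real.dist_eq] using this
  -- c tends to 0
  have hctend : Tendsto c atTop (𝓝 0) := by
    rw [Metric.tendsto_atTop]
    intro ε hε
    obtain ⟨N, hN⟩ := hunif (ε / 2) (by positivity)
    refine ⟨N, fun k hk => ?_⟩
    have h1 : c k ≤ ε / 2 := by
      refine csSup_le (hGne k) fun r hr => ?_
      obtain ⟨p, hp, rfl⟩ := hr
      have := hN p.1 p.2 fun i hi => hp i (lt_of_lt_of_le hi hk)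
      exact (le_of_lt (abs_lt.1 this).2)
    rw [Real.dist_eq, sub_zero, abs_of_nonneg (hc0 k)]
    linarith
  -- variation estimate
  have hvar := iter_ratio μ hf B hB c hc_le
  -- Fekete
  have hbdd_s : BddBelow (Set.range fun n => s n / n) := by
    refine ⟨-B, fun r hr => ?_⟩
    obtain ⟨n, rfl⟩ := hr
    rcases Nat.eq_zero_or_pos n with h | h
    · subst h; simp [hB0]
    · have hn : (0 : ℝ) < n := by exact_mod_cast h
      rw [le_div_iff₀ hn]
      calc -B * n = -(n * B) := by ring
        _ ≤ I n := hI_lb n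
        _ ≤ s n := hsI n
  have hbdd_t : BddBelow (Set.range fun n => -(I n) / n) := by
    refine ⟨-B, fun r hr => ?_⟩
    obtain ⟨n, rfl⟩ := hr
    rcases Nat.eq_zero_or_pos n with h | h
    · subst h; simp [hB0]
    · have hn : (0 : ℝ) < n := by exact_mod_cast h
      rw [le_div_iff₀ hn]
      have h1 : I n ≤ n * B := (hsI n).trans (hs_ub n)
      nlinarith
  have hlim_s := hsub.tendsto_lim hbdd_s
  have hlim_t := hsuper.tendsto_lim hbdd_t
  have hlim_I : Tendsto (fun n => I n / n) atTop (𝓝 (-hsuper.lim)) := by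
    have := hlim_t.neg
    simp only [neg_div, neg_neg] at this
    exact this
  -- the two limits agree
  have hδ : Tendsto (fun n : ℕ => (n : ℝ)⁻¹ * ∑ j ∈ Finset.range n, c (j + 1)) atTop (𝓝 0) :=
    Tendsto.cesaro (hctend.comp (tendsto_add_atTop_nat 1))
  have hvn : ∀ n, s n - I n ≤ ∑ j ∈ Finset.range n, c (j + 1) := by
    intro n
    have key : ∀ x y : ℕ → M, Real.log ((Ruelle μ f)^[n] 1 x) ≤
        (∑ j ∈ Finset.range n, c (j + 1)) + Real.log ((Ruelle μ f)^[n] 1 y) := by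
      intro x y
      have h1 := hvar n 0 x y fun i hi => absurd hi (Nat.not_lt_zero i)
      have h2 : (∑ j ∈ Finset.range n, c (0 + 1 + j)) = ∑ j ∈ Finset.range n, c (j + 1) :=
        Finset.sum_congr rfl fun i _ => congrArg c (by omega)
      rw [h2] at h1
      calc Real.log ((Ruelle μ f)^[n] 1 x)
          ≤ Real.log (Real.exp (∑ j ∈ Finset.range n, c (j + 1)) * (Ruelle μ f)^[n] 1 y) :=
            Real.log_le_log (hApos n x) h1
        _ = _ := by
            rw [Real.log_mul (Real.exp_ne_zero _) (hApos n y).ne', Real.log_exp]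
    have h3 : s n ≤ (∑ j ∈ Finset.range n, c (j + 1)) + I n := by
      refine ciSup_le fun x => ?_
      have : Real.log ((Ruelle μ f)^[n] 1 x) - (∑ j ∈ Finset.range n, c (j + 1)) ≤ I n :=
        le_ciInf fun y => by linarith [key x y]
      linarith
    linarith
  have hdiff : ∀ n : ℕ, s n / n - I n / n ≤ (n : ℝ)⁻¹ * ∑ j ∈ Finset.range n, c (j + 1) := by
    intro n
    rcases Nat.eq_zero_or_pos n with h | h
    · subst h; simp
    · have hn : (0 : ℝ) < n := by exact_mod_cast h
      have heq : s n / n - I n / n = (s n - I n) / n := by ring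
      rw [heq, inv_mul_eq_div]
      exact (div_le_div_iff_of_pos_right hn).2 (hvn n)
  have hge : ∀ n : ℕ, (0 : ℝ) ≤ s n / n - I n / n := by
    intro n
    rcases Nat.eq_zero_or_pos n with h | h
    · subst h; simp
    · have hn : (0 : ℝ) < n := by exact_mod_cast h
      have h4 : I n / n ≤ s n / n := (div_le_div_iff_of_pos_right hn).2 (hsI n)
      linarith
  have hlim_diff : Tendsto (fun n => s n / n - I n / n) atTop
      (𝓝 (hsub.lim - -hsuper.lim)) := hlim_s.sub hlim_I
  have h2 : hsub.lim - -hsuper.lim ≤ 0 := le_of_tendsto_of_tendsto' hlim_diff hδ hdiff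
  have h3 : (0 : ℝ) ≤ hsub.lim - -hsuper.lim :=
    le_of_tendsto_of_tendsto' tendsto_const_nhds hlim_diff hge
  have hpe : -hsuper.lim = hsub.lim := by linarith
  refine ⟨hsub.lim, ?_⟩
  rw [Metric.tendstoUniformly_iff]
  intro ε hε
  have e1 := hlim_s.eventually_lt_const (show hsub.lim < hsub.lim + ε by linarith)
  have e2 := hlim_I.eventually_const_lt
    (show hsub.lim - ε < -hsuper.lim by rw [hpe]; linarith)
  filter_upwards [e1, e2, eventually_ge_atTop 1] with n h1' h2' hn x
  have hn0 : (0 : ℝ) < n := by exact_mod_cast hn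
  have hval : (n : ℝ)⁻¹ * Real.log ((Ruelle μ f)^[n] 1 x) =
      Real.log ((Ruelle μ f)^[n] 1 x) / n := by rw [inv_mul_eq_div]
  have hx1 : Real.log ((Ruelle μ f)^[n] 1 x) / n ≤ s n / n :=
    (div_le_div_iff_of_pos_right hn0).2 (hs_le n x)
  have hx2 : I n / n ≤ Real.log ((Ruelle μ f)^[n] 1 x) / n :=
    (div_le_div_iff_of_pos_right hn0).2 (hI_le n x)
  simp only [Real.dist_eq, hval, abs_sub_lt_iff]
  constructor
  · linarith
  · linarith
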